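/- Let a^{j̄i} be a positive-definite Hermitian n×n matrix, b ∈ ℂⁿ with b^i = ∑_j a^{j̄i} b̄_j, α² = ∑ a^{j̄i} ζ̄_j ζ_i, β = ∑ b^i ζ_i, 𝒞̃ = α + |β|, ‖b‖² = ∑ a^{j̄i} b_i b̄_j, γ = 𝒞̃² + α²(‖b‖² − 1). Then the Hermitian matrix h̃^{j̄i} := (𝒞̃/α) a^{j̄i} − (𝒞̃/(2α³)) ζ^{j̄} ζ^i + (𝒞̃/(2|β|)) b^{j̄} b^i + (1/(2𝒞̃²)) ζ̃^{j̄} ζ̃^i, where ζ^i = ∑_j a^{j̄i}ζ̄_j (so ζ^i = ∂α²/∂ζ_i) and ζ̃^i = (𝒞̃/α)ζ^i + (𝒞̃β̄/|β|) b^i, satisfies det(h̃^{j̄i}) = (𝒞̃/α)ⁿ · (γ/(2α|β|)) · det(a^{j̄i}). -/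

import Mathlib

open scoped BigOperators ComplexOrder
open Complex

noncomputable section

/-- b^i = ∑_j a^{j̄i} b̄_j. -/
def bupF {n : ℕ} (a : Matrix (Fin n) (Fin n) ℂ) (b : Fin n → ℂ) (i : Fin n) : ℂ :=
  ∑ j, a j i * (starRingEnd ℂ) (b j)

/-- β = ∑_i b^i ζ_i. -/
def betaF {n : ℕ} (a : Matrix (Fin n) (Fin n) ℂ) (b ζ : Fin n → ℂ) : ℂ :=
  ∑ i, bupF a b i * ζ i

/-- ζ^i = ∑_j a^{j̄i} ζ̄_j = ∂α²/∂ζ_i. -/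
def zupF {n : ℕ} (a : Matrix (Fin n) (Fin n) ℂ) (ζ : Fin n → ℂ) (i : Fin n) : ℂ :=
  ∑ j, a j i * (starRingEnd ℂ) (ζ j)

/-- α² = ∑ a^{j̄i} ζ̄_j ζ_i (a real number). -/
def alphaSqF {n : ℕ} (a : Matrix (Fin n) (Fin n) ℂ) (ζ : Fin n → ℂ) : ℝ :=
  (∑ j, ∑ i, a j i * (starRingEnd ℂ) (ζ j) * ζ i).re

/-- α. -/
def alphaF {n : ℕ} (a : Matrix (Fin n) (Fin n) ℂ) (ζ : Fin n → ℂ) : ℝ :=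
  Real.sqrt (alphaSqF a ζ)

/-- ‖b‖² = ∑ a^{j̄i} b_i b̄_j. -/
def nbF {n : ℕ} (a : Matrix (Fin n) (Fin n) ℂ) (b : Fin n → ℂ) : ℝ :=
  (∑ j, ∑ i, a j i * b i * (starRingEnd ℂ) (b j)).re

/-- 𝒞̃ = α + |β|. -/
def CF {n : ℕ} (a : Matrix (Fin n) (Fin n) ℂ) (b ζ : Fin n → ℂ) : ℝ :=
  alphaF a ζ + ‖betaF a b ζ‖

/-- γ = 𝒞̃² + α²(‖b‖² − 1). -/
def gammaF {n : ℕ} (a : Matrix (Fin n) (Fin n) ℂ) (b ζ : Fin n → ℂ) : ℝ :=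
  (CF a b ζ) ^ 2 + (alphaSqF a ζ) * (nbF a b - 1)

/-- ζ̃^i = (𝒞̃/α)ζ^i + (𝒞̃β̄/|β|)b^i. -/
def ztilF {n : ℕ} (a : Matrix (Fin n) (Fin n) ℂ) (b ζ : Fin n → ℂ) (i : Fin n) : ℂ :=
  ((CF a b ζ : ℝ) : ℂ) / ((alphaF a ζ : ℝ) : ℂ) * zupF a ζ i +
    ((CF a b ζ : ℝ) : ℂ) * (starRingEnd ℂ) (betaF a b ζ) /
      ((‖betaF a b ζ‖ : ℝ) : ℂ) * bupF a b i

/-- The fundamental tensor h̃^{j̄i} of the Cartan–Randers metric 𝒞̃ = α + |β|. -/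
def htilF {n : ℕ} (a : Matrix (Fin n) (Fin n) ℂ) (b ζ : Fin n → ℂ) :
    Matrix (Fin n) (Fin n) ℂ := Matrix.of fun j i =>
  ((CF a b ζ : ℝ) : ℂ) / ((alphaF a ζ : ℝ) : ℂ) * a j i
    - ((CF a b ζ : ℝ) : ℂ) / (2 * ((alphaF a ζ : ℝ) : ℂ) ^ 3) *
        (starRingEnd ℂ) (zupF a ζ j) * zupF a ζ i
    + ((CF a b ζ : ℝ) : ℂ) / (2 * ((‖betaF a b ζ‖ : ℝ) : ℂ)) *
        (starRingEnd ℂ) (bupF a b j) * bupF a b i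
    + 1 / (2 * ((CF a b ζ : ℝ) : ℂ) ^ 2) * (starRingEnd ℂ) (ztilF a b ζ j) * ztilF a b ζ i

end


section AuxCR
open Finset
variable {n : ℕ}

variable {n : ℕ}

lemma conj_entry (a : Matrix (Fin n) (Fin n) ℂ) (h : a.IsHermitian) (i j : Fin n) :
    (starRingEnd ℂ) (a i j) = a j i := h.apply j i

lemma real_quad (a : Matrix (Fin n) (Fin n) ℂ) (h : a.IsHermitian) (x : Fin n → ℂ) :
    (starRingEnd ℂ) (∑ j, ∑ i, a j i * (starRingEnd ℂ) (x j) * x i)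
      = ∑ j, ∑ i, a j i * (starRingEnd ℂ) (x j) * x i := by
  simp only [map_sum, map_mul, Complex.conj_conj]
  rw [Finset.sum_comm]
  exact Finset.sum_congr rfl fun j _ => Finset.sum_congr rfl fun i _ => by
    rw [← conj_entry a h i j]; ring

-- real value as complex for the quadratic form (x version with a j i * x i * conj x j order)
lemma real_quad' (a : Matrix (Fin n) (Fin n) ℂ) (h : a.IsHermitian) (x : Fin n → ℂ) :
    (∑ j, ∑ i, a j i * x i * (starRingEnd ℂ) (x j))
      = (((∑ j, ∑ i, a j i * x i * (starRingEnd ℂ) (x j)).re : ℝ) : ℂ) := by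
  have h2 : (∑ j, ∑ i, a j i * x i * (starRingEnd ℂ) (x j))
      = ∑ j, ∑ i, a j i * (starRingEnd ℂ) (x j) * x i :=
    Finset.sum_congr rfl fun j _ => Finset.sum_congr rfl fun i _ => by ring
  rw [h2]
  exact ((Complex.conj_eq_iff_re).mp (real_quad a h x)).symm

lemma sum_zup_zeta (a : Matrix (Fin n) (Fin n) ℂ) (h : a.IsHermitian) (ζ : Fin n → ℂ) :
    (∑ i, zupF a ζ i * ζ i) = ((alphaSqF a ζ : ℝ) : ℂ) := by
  have h1 : (∑ i, zupF a ζ i * ζ i) = ∑ j, ∑ i, a j i * (starRingEnd ℂ) (ζ j) * ζ i := by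
    simp only [zupF, Finset.sum_mul]
    rw [Finset.sum_comm]
  rw [h1, alphaSqF]
  exact (Complex.conj_eq_iff_re).mp (real_quad a h ζ) |>.symm

lemma sum_bup_b (a : Matrix (Fin n) (Fin n) ℂ) (h : a.IsHermitian) (b : Fin n → ℂ) :
    (∑ i, bupF a b i * b i) = ((nbF a b : ℝ) : ℂ) := by
  have h1 : (∑ i, bupF a b i * b i) = ∑ j, ∑ i, a j i * b i * (starRingEnd ℂ) (b j) := by
    simp only [bupF, Finset.sum_mul]
    rw [Finset.sum_comm]
    exact Finset.sum_congr rfl fun j _ => Finset.sum_congr rfl fun i _ => by ring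
  rw [h1, nbF]
  exact real_quad' a h b

lemma sum_zup_b (a : Matrix (Fin n) (Fin n) ℂ) (h : a.IsHermitian) (b ζ : Fin n → ℂ) :
    (∑ i, zupF a ζ i * b i) = (starRingEnd ℂ) (betaF a b ζ) := by
  simp only [betaF, bupF, zupF, map_sum, map_mul, Complex.conj_conj, Finset.sum_mul]
  rw [Finset.sum_comm]
  exact Finset.sum_congr rfl fun x _ => Finset.sum_congr rfl fun y _ => by
    rw [← conj_entry a h y x]; ring

lemma conj_zup (a : Matrix (Fin n) (Fin n) ℂ) (h : a.IsHermitian) (ζ : Fin n → ℂ) (j : Fin n) :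
    (starRingEnd ℂ) (zupF a ζ j) = ∑ i, a j i * ζ i := by
  simp only [zupF, map_sum, map_mul, Complex.conj_conj]
  exact Finset.sum_congr rfl fun i _ => by rw [conj_entry a h i j]

end AuxCR

set_option maxHeartbeats 1000000 in
/-- The determinant formula det(h̃^{j̄i}) = (𝒞̃/α)ⁿ (γ/(2α|β|)) det(a^{j̄i}) for the
fundamental tensor of the Cartan–Randers metric 𝒞̃ = α + |β|. -/
theorem cartan_randers_det (n : ℕ) (a : Matrix (Fin n) (Fin n) ℂ) (b ζ : Fin n → ℂ)
    (hpos : a.PosDef) (hζ : ζ ≠ 0) (hβ : betaF a b ζ ≠ 0) :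
    (htilF a b ζ).det =
      (((CF a b ζ / alphaF a ζ : ℝ)) : ℂ) ^ n *
        (((gammaF a b ζ / (2 * alphaF a ζ * ‖betaF a b ζ‖) : ℝ)) : ℂ) *
        a.det := by
  classical
  have hherm := hpos.1
  set β : ℂ := betaF a b ζ with hβdef
  set m : ℝ := ‖β‖ with hmdef
  set S : ℝ := alphaSqF a ζ with hSdef
  set A : ℝ := alphaF a ζ with hAdef
  set C : ℝ := CF a b ζ with hCdef
  set t : ℝ := nbF a b with htdef
  have hd := hpos.dotProduct_mulVec_pos hζ
  have hdre : 0 < (dotProduct (star ζ) (a.mulVec ζ)).re ∧ (dotProduct (star ζ) (a.mulVec ζ)).im = 0 := by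
    rw [Complex.lt_def] at hd
    simp only [Complex.zero_re, Complex.zero_im] at hd
    exact ⟨hd.1, hd.2.symm⟩
  have hsumdot : (∑ j, ∑ i, a j i * (starRingEnd ℂ) (ζ j) * ζ i) = dotProduct (star ζ) (a.mulVec ζ) := by
    simp only [dotProduct, Matrix.mulVec, Pi.star_apply, Finset.mul_sum]
    exact Finset.sum_congr rfl fun j _ => Finset.sum_congr rfl fun i _ => by
      rw [starRingEnd_apply]; ring
  have hSpos : 0 < S := by
    rw [hSdef, alphaSqF, hsumdot]; exact hdre.1
  have hApos : 0 < A := by rw [hAdef, alphaF, ← hSdef]; exact Real.sqrt_pos.mpr hSpos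
  have hA2 : A ^ 2 = S := by rw [hAdef, alphaF, ← hSdef]; exact Real.sq_sqrt hSpos.le
  have hmpos : 0 < m := by rw [hmdef]; exact norm_pos_iff.mpr hβ
  have hCeq : C = A + m := by rw [hCdef, CF, ← hAdef, ← hβdef, ← hmdef]
  have hCpos : 0 < C := by rw [hCeq]; positivity
  have hAne : ((A : ℝ) : ℂ) ≠ 0 := Complex.ofReal_ne_zero.mpr hApos.ne'
  have hmne : ((m : ℝ) : ℂ) ≠ 0 := Complex.ofReal_ne_zero.mpr hmpos.ne'
  have hCne : ((C : ℝ) : ℂ) ≠ 0 := Complex.ofReal_ne_zero.mpr hCpos.ne'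
  have hBc : (starRingEnd ℂ) β = ((m : ℝ) : ℂ) ^ 2 / β := by
    rw [eq_div_iff hβ, mul_comm, Complex.mul_conj, hmdef, ← Complex.sq_norm]
    norm_cast
  -- the rank-3 factors
  set s : ℂ := ((C : ℝ) : ℂ) / ((A : ℝ) : ℂ) with hsdef
  have hsne : s ≠ 0 := div_ne_zero hCne hAne
  set c : Fin 3 → ℂ := ![-((C:ℝ):ℂ)/(2*((A:ℝ):ℂ)^3), ((C:ℝ):ℂ)/(2*((m:ℝ):ℂ)), 1/(2*((C:ℝ):ℂ)^2)] with hcdef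
  set w : Fin 3 → Fin n → ℂ :=
    ![ζ, b, fun i => ((C:ℝ):ℂ)/((A:ℝ):ℂ) * ζ i + ((C:ℝ):ℂ)*β/((m:ℝ):ℂ) * b i] with hwdef
  set u : Fin 3 → Fin n → ℂ := ![zupF a ζ, bupF a b, ztilF a b ζ] with hudef
  set L : Matrix (Fin n) (Fin 3) ℂ := Matrix.of (fun j k => c k * w k j) with hLdef
  set V : Matrix (Fin 3) (Fin n) ℂ := Matrix.of (fun k i => u k i) with hVdef
  -- conjugates of up-indices vectors
  have hcz : ∀ j, (starRingEnd ℂ) (zupF a ζ j) = ∑ i, a j i * ζ i := conj_zup a hherm ζ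
  have hcb : ∀ j, (starRingEnd ℂ) (bupF a b j) = ∑ i, a j i * b i := conj_zup a hherm b
  have hczt : ∀ j, (starRingEnd ℂ) (ztilF a b ζ j) = ∑ i, a j i * w 2 i := by
    intro j
    simp only [ztilF, map_add, map_mul, map_div₀, Complex.conj_ofReal, Complex.conj_conj,
      hcz j, hcb j, hwdef]
    simp only [Matrix.cons_val_two, Matrix.tail_cons, Matrix.head_cons]
    rw [Finset.mul_sum, Finset.mul_sum, ← Finset.sum_add_distrib]
    rw [← hβdef, ← hmdef, ← hAdef, ← hCdef]
    exact Finset.sum_congr rfl fun i _ => by ring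
  -- factorization
  have hfac : htilF a b ζ = a * (s • 1 + L * V) := by
    have hAL : a * L = Matrix.of (fun j k => c k * (starRingEnd ℂ) (u k j)) := by
      ext j k
      simp only [Matrix.mul_apply, hLdef, Matrix.of_apply]
      fin_cases k
      · simp only [hcdef, hwdef, hudef, Fin.zero_eta, Fin.isValue]
        simp only [Matrix.cons_val_zero]
        rw [hcz j, Finset.mul_sum]
        exact Finset.sum_congr rfl fun i _ => by ring
      · simp only [hcdef, hwdef, hudef, Fin.mk_one, Fin.isValue]
        simp only [Matrix.cons_val_one, Matrix.head_cons, Matrix.cons_val_zero]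
        rw [hcb j, Finset.mul_sum]
        exact Finset.sum_congr rfl fun i _ => by ring
      · simp only [hcdef, hudef, Fin.isValue, show (⟨2, by omega⟩ : Fin 3) = 2 from rfl]
        simp only [Matrix.cons_val_two, Matrix.tail_cons, Matrix.head_cons]
        rw [hczt j, Finset.mul_sum]
        exact Finset.sum_congr rfl fun i _ => by ring
    rw [Matrix.mul_add, Matrix.mul_smul, Matrix.mul_one, ← Matrix.mul_assoc, hAL]
    ext j i
    simp only [htilF, Matrix.add_apply, Matrix.smul_apply, Matrix.of_apply, Matrix.mul_apply,
      smul_eq_mul, hVdef, hudef, hcdef]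
    rw [← hβdef, ← hmdef, ← hAdef, ← hCdef, Fin.sum_univ_three]
    simp only [Matrix.cons_val_zero, Matrix.cons_val_one, Matrix.head_cons,
      Matrix.cons_val_two, Matrix.tail_cons, Matrix.of_apply]
    ring
  -- determinant reduction
  have hdet1 : (htilF a b ζ).det = a.det * (s • (1:Matrix (Fin n) (Fin n) ℂ) + L * V).det := by
    rw [hfac, Matrix.det_mul]
  have hdet2 : (s • (1:Matrix (Fin n) (Fin n) ℂ) + L * V).det
      = s ^ n * (1 + (s⁻¹ • V) * L).det := by
    have hXsmul : s • (1:Matrix (Fin n) (Fin n) ℂ) + L * V = s • (1 + L * (s⁻¹ • V)) := by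
      rw [smul_add, Matrix.mul_smul, smul_smul, mul_inv_cancel₀ hsne, one_smul]
    rw [hXsmul, Matrix.det_smul, Fintype.card_fin, Matrix.det_one_add_mul_comm]
  -- helper linearity lemmas
  have lin1 : ∀ (p q : ℂ) (g : Fin n → ℂ),
      (∑ i, (p * zupF a ζ i + q * bupF a b i) * g i)
        = p * (∑ i, zupF a ζ i * g i) + q * (∑ i, bupF a b i * g i) := by
    intro p q g
    rw [Finset.mul_sum, Finset.mul_sum, ← Finset.sum_add_distrib]
    exact Finset.sum_congr rfl fun i _ => by ring
  have lin2 : ∀ (p q : ℂ) (f : Fin n → ℂ),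
      (∑ i, f i * (p * ζ i + q * b i))
        = p * (∑ i, f i * ζ i) + q * (∑ i, f i * b i) := by
    intro p q f
    rw [Finset.mul_sum, Finset.mul_sum, ← Finset.sum_add_distrib]
    exact Finset.sum_congr rfl fun i _ => by ring
  have hztil : ∀ i, ztilF a b ζ i
      = ((C:ℝ):ℂ)/((A:ℝ):ℂ) * zupF a ζ i + ((C:ℝ):ℂ) * (starRingEnd ℂ) β/((m:ℝ):ℂ) * bupF a b i :=
    fun i => rfl
  -- the nine Gram sums
  have hG00 : (∑ i, zupF a ζ i * ζ i) = ((S:ℝ):ℂ) := sum_zup_zeta a hherm ζ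
  have hG01 : (∑ i, zupF a ζ i * b i) = (starRingEnd ℂ) β := sum_zup_b a hherm b ζ
  have hG10 : (∑ i, bupF a b i * ζ i) = β := rfl
  have hG11 : (∑ i, bupF a b i * b i) = ((t:ℝ):ℂ) := sum_bup_b a hherm b
  have hG02 : (∑ i, zupF a ζ i * (((C:ℝ):ℂ)/((A:ℝ):ℂ) * ζ i + ((C:ℝ):ℂ)*β/((m:ℝ):ℂ) * b i))
      = ((C:ℝ):ℂ)/((A:ℝ):ℂ) * ((S:ℝ):ℂ) + ((C:ℝ):ℂ)*β/((m:ℝ):ℂ) * (starRingEnd ℂ) β := by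
    rw [lin2, hG00, hG01]
  have hG12 : (∑ i, bupF a b i * (((C:ℝ):ℂ)/((A:ℝ):ℂ) * ζ i + ((C:ℝ):ℂ)*β/((m:ℝ):ℂ) * b i))
      = ((C:ℝ):ℂ)/((A:ℝ):ℂ) * β + ((C:ℝ):ℂ)*β/((m:ℝ):ℂ) * ((t:ℝ):ℂ) := by
    rw [lin2, hG10, hG11]
  have hG20 : (∑ i, ztilF a b ζ i * ζ i)
      = ((C:ℝ):ℂ)/((A:ℝ):ℂ) * ((S:ℝ):ℂ) + ((C:ℝ):ℂ) * (starRingEnd ℂ) β/((m:ℝ):ℂ) * β := by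
    simp only [hztil]; rw [lin1, hG00, hG10]
  have hG21 : (∑ i, ztilF a b ζ i * b i)
      = ((C:ℝ):ℂ)/((A:ℝ):ℂ) * (starRingEnd ℂ) β + ((C:ℝ):ℂ) * (starRingEnd ℂ) β/((m:ℝ):ℂ) * ((t:ℝ):ℂ) := by
    simp only [hztil]; rw [lin1, hG01, hG11]
  have hG22 : (∑ i, ztilF a b ζ i * (((C:ℝ):ℂ)/((A:ℝ):ℂ) * ζ i + ((C:ℝ):ℂ)*β/((m:ℝ):ℂ) * b i))
      = ((C:ℝ):ℂ)/((A:ℝ):ℂ) * (((C:ℝ):ℂ)/((A:ℝ):ℂ) * ((S:ℝ):ℂ) + ((C:ℝ):ℂ)*β/((m:ℝ):ℂ) * (starRingEnd ℂ) β)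
        + ((C:ℝ):ℂ) * (starRingEnd ℂ) β/((m:ℝ):ℂ)
          * (((C:ℝ):ℂ)/((A:ℝ):ℂ) * β + ((C:ℝ):ℂ)*β/((m:ℝ):ℂ) * ((t:ℝ):ℂ)) := by
    simp only [hztil]; rw [lin1, hG02, hG12]
  -- entries of the 3×3 matrix
  have hVL : ∀ k l, ((s⁻¹ • V) * L) k l = s⁻¹ * c l * (∑ i, u k i * w l i) := by
    intro k l
    simp only [Matrix.mul_apply, Matrix.smul_apply, hVdef, hLdef, Matrix.of_apply, smul_eq_mul]
    rw [Finset.mul_sum]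
    exact Finset.sum_congr rfl fun i _ => by ring
  have hent : ∀ k l, ((1 + (s⁻¹ • V) * L : Matrix (Fin 3) (Fin 3) ℂ)) k l
      = (if k = l then 1 else 0) + s⁻¹ * c l * (∑ i, u k i * w l i) := by
    intro k l
    rw [Matrix.add_apply, hVL, Matrix.one_apply]
  -- entries explicitly
  have e00 : ((1 + (s⁻¹ • V) * L : Matrix (Fin 3) (Fin 3) ℂ)) 0 0
      = 1 + s⁻¹ * (-((C:ℝ):ℂ)/(2*((A:ℝ):ℂ)^3)) * ((S:ℝ):ℂ) := by
    rw [hent 0 0]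
    simp only [hudef, hwdef, hcdef, Matrix.cons_val_zero, Matrix.cons_val_one, Matrix.head_cons,
      Matrix.cons_val_two, Matrix.tail_cons]
    rw [hG00]
    norm_num [Fin.ext_iff]
  have e01 : ((1 + (s⁻¹ • V) * L : Matrix (Fin 3) (Fin 3) ℂ)) 0 1
      = s⁻¹ * (((C:ℝ):ℂ)/(2*((m:ℝ):ℂ))) * ((starRingEnd ℂ) β) := by
    rw [hent 0 1]
    simp only [hudef, hwdef, hcdef, Matrix.cons_val_zero, Matrix.cons_val_one, Matrix.head_cons,
      Matrix.cons_val_two, Matrix.tail_cons]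
    rw [hG01]
    norm_num [Fin.ext_iff]
  have e02 : ((1 + (s⁻¹ • V) * L : Matrix (Fin 3) (Fin 3) ℂ)) 0 2
      = s⁻¹ * (1/(2*((C:ℝ):ℂ)^2)) * (((C:ℝ):ℂ)/((A:ℝ):ℂ) * ((S:ℝ):ℂ) + ((C:ℝ):ℂ)*β/((m:ℝ):ℂ) * (starRingEnd ℂ) β) := by
    rw [hent 0 2]
    simp only [hudef, hwdef, hcdef, Matrix.cons_val_zero, Matrix.cons_val_one, Matrix.head_cons,
      Matrix.cons_val_two, Matrix.tail_cons]
    rw [hG02]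
    norm_num [Fin.ext_iff]
  have e10 : ((1 + (s⁻¹ • V) * L : Matrix (Fin 3) (Fin 3) ℂ)) 1 0
      = s⁻¹ * (-((C:ℝ):ℂ)/(2*((A:ℝ):ℂ)^3)) * β := by
    rw [hent 1 0]
    simp only [hudef, hwdef, hcdef, Matrix.cons_val_zero, Matrix.cons_val_one, Matrix.head_cons,
      Matrix.cons_val_two, Matrix.tail_cons]
    rw [hG10]
    norm_num [Fin.ext_iff]
  have e11 : ((1 + (s⁻¹ • V) * L : Matrix (Fin 3) (Fin 3) ℂ)) 1 1
      = 1 + s⁻¹ * (((C:ℝ):ℂ)/(2*((m:ℝ):ℂ))) * ((t:ℝ):ℂ) := by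
    rw [hent 1 1]
    simp only [hudef, hwdef, hcdef, Matrix.cons_val_zero, Matrix.cons_val_one, Matrix.head_cons,
      Matrix.cons_val_two, Matrix.tail_cons]
    rw [hG11]
    norm_num [Fin.ext_iff]
  have e12 : ((1 + (s⁻¹ • V) * L : Matrix (Fin 3) (Fin 3) ℂ)) 1 2
      = s⁻¹ * (1/(2*((C:ℝ):ℂ)^2)) * (((C:ℝ):ℂ)/((A:ℝ):ℂ) * β + ((C:ℝ):ℂ)*β/((m:ℝ):ℂ) * ((t:ℝ):ℂ)) := by
    rw [hent 1 2]
    simp only [hudef, hwdef, hcdef, Matrix.cons_val_zero, Matrix.cons_val_one, Matrix.head_cons,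
      Matrix.cons_val_two, Matrix.tail_cons]
    rw [hG12]
    norm_num [Fin.ext_iff]
  have e20 : ((1 + (s⁻¹ • V) * L : Matrix (Fin 3) (Fin 3) ℂ)) 2 0
      = s⁻¹ * (-((C:ℝ):ℂ)/(2*((A:ℝ):ℂ)^3)) * (((C:ℝ):ℂ)/((A:ℝ):ℂ) * ((S:ℝ):ℂ) + ((C:ℝ):ℂ) * (starRingEnd ℂ) β/((m:ℝ):ℂ) * β) := by
    rw [hent 2 0]
    simp only [hudef, hwdef, hcdef, Matrix.cons_val_zero, Matrix.cons_val_one, Matrix.head_cons,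
      Matrix.cons_val_two, Matrix.tail_cons]
    rw [hG20]
    norm_num [Fin.ext_iff]
  have e21 : ((1 + (s⁻¹ • V) * L : Matrix (Fin 3) (Fin 3) ℂ)) 2 1
      = s⁻¹ * (((C:ℝ):ℂ)/(2*((m:ℝ):ℂ))) * (((C:ℝ):ℂ)/((A:ℝ):ℂ) * (starRingEnd ℂ) β + ((C:ℝ):ℂ) * (starRingEnd ℂ) β/((m:ℝ):ℂ) * ((t:ℝ):ℂ)) := by
    rw [hent 2 1]
    simp only [hudef, hwdef, hcdef, Matrix.cons_val_zero, Matrix.cons_val_one, Matrix.head_cons,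
      Matrix.cons_val_two, Matrix.tail_cons]
    rw [hG21]
    norm_num [Fin.ext_iff]
  have e22 : ((1 + (s⁻¹ • V) * L : Matrix (Fin 3) (Fin 3) ℂ)) 2 2
      = 1 + s⁻¹ * (1/(2*((C:ℝ):ℂ)^2)) * (((C:ℝ):ℂ)/((A:ℝ):ℂ) * (((C:ℝ):ℂ)/((A:ℝ):ℂ) * ((S:ℝ):ℂ) + ((C:ℝ):ℂ)*β/((m:ℝ):ℂ) * (starRingEnd ℂ) β) + ((C:ℝ):ℂ) * (starRingEnd ℂ) β/((m:ℝ):ℂ) * (((C:ℝ):ℂ)/((A:ℝ):ℂ) * β + ((C:ℝ):ℂ)*β/((m:ℝ):ℂ) * ((t:ℝ):ℂ))) := by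
    rw [hent 2 2]
    simp only [hudef, hwdef, hcdef, Matrix.cons_val_zero, Matrix.cons_val_one, Matrix.head_cons,
      Matrix.cons_val_two, Matrix.tail_cons]
    rw [hG22]
    norm_num [Fin.ext_iff]
  -- compute the 3×3 determinant
  have hdetE : ((1 + (s⁻¹ • V) * L : Matrix (Fin 3) (Fin 3) ℂ)).det
      = (((C:ℝ):ℂ)^2 + ((S:ℝ):ℂ)*(((t:ℝ):ℂ)-1))/(2*((A:ℝ):ℂ)*((m:ℝ):ℂ)) := by
    rw [Matrix.det_fin_three, e00, e01, e02, e10, e11, e12, e20, e21, e22]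
    have hScast : ((S:ℝ):ℂ) = ((A:ℝ):ℂ)^2 := by rw [← hA2]; push_cast; ring
    have hCcast : ((C:ℝ):ℂ) = ((A:ℝ):ℂ) + ((m:ℝ):ℂ) := by rw [hCeq]; push_cast; ring
    rw [hsdef, hBc, hScast, hCcast]
    have hAmne : ((A:ℝ):ℂ) + ((m:ℝ):ℂ) ≠ 0 := by rw [← hCcast]; exact hCne
    field_simp
    ring
  -- conclude
  rw [hdet1, hdet2, hdetE]
  have hgamma : gammaF a b ζ = C^2 + S*(t-1) := rfl
  rw [hgamma]
  rw [show ((C/A : ℝ):ℂ) = s from by rw [hsdef]; push_cast; ring]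
  rw [show (((C^2 + S*(t-1)) / (2*A*m) : ℝ):ℂ)
      = (((C:ℝ):ℂ)^2 + ((S:ℝ):ℂ)*(((t:ℝ):ℂ)-1))/(2*((A:ℝ):ℂ)*((m:ℝ):ℂ)) from by push_cast; ring]
  ring
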